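/- (Schatten norm under partial trace.) Let M be a complex matrix on the tensor product space ℂ^{d_A} ⊗ ℂ^{d_B} and let p ≥ 1 be a real number. Then ‖Tr_B(M)‖_p ≤ d_B^{(p−1)/p} · ‖M‖_p, where Tr_B denotes the partial trace over the second tensor factor. -/

import Mathlib

set_option linter.unusedSectionVars false
set_option maxHeartbeats 1000000


open Matrix
open scoped Kronecker Classical ComplexOrder

noncomputable section

/-- The qubit depolarizing channel `Δ_ρ(φ) = ρ·φ + (1-ρ)·Tr[φ]·I/2`. -/
def delta (ρ : ℝ) (φ : Matrix (Fin 2) (Fin 2) ℂ) : Matrix (Fin 2) (Fin 2) ℂ :=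
  (ρ : ℂ) • φ + (((1 - ρ : ℝ) : ℂ) * φ.trace / 2) • (1 : Matrix (Fin 2) (Fin 2) ℂ)

/-- `Δ_ρ^{⊗n}`, the n-fold tensor power of the depolarizing channel on n qubits. -/
def deltaPow (ρ : ℝ) (n : ℕ) (M : Matrix (Fin n → Fin 2) (Fin n → Fin 2) ℂ) :
    Matrix (Fin n → Fin 2) (Fin n → Fin 2) ℂ :=
  Matrix.of fun x y => ∑ a : Fin n → Fin 2, ∑ b : Fin n → Fin 2,
    M a b * ∏ i : Fin n, delta ρ (Matrix.single (a i) (b i) 1) (x i) (y i)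

/-- The tensor product `L1 ⊗ L2` of two (linear) maps on matrix spaces. -/
def lmTensor {I I' J J' : Type*} [Fintype I] [DecidableEq I]
    (L1 : Matrix I I ℂ → Matrix I' I' ℂ) (L2 : Matrix J J ℂ → Matrix J' J' ℂ)
    (M : Matrix (I × J) (I × J) ℂ) : Matrix (I' × J') (I' × J') ℂ :=
  Matrix.of fun p q => ∑ a : I, ∑ b : I,
    L1 (Matrix.single a b 1) p.1 q.1 *
      L2 (Matrix.of fun j j' => M (a, j) (b, j')) p.2 q.2

/-- Application of a single-qubit (linear) map `L` to the `k`-th qubit of an `N`-qubit register,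
i.e. `id ⊗ ... ⊗ L ⊗ ... ⊗ id`. -/
def applyAt {N : ℕ} (k : Fin N) (L : Matrix (Fin 2) (Fin 2) ℂ → Matrix (Fin 2) (Fin 2) ℂ)
    (M : Matrix (Fin N → Fin 2) (Fin N → Fin 2) ℂ) :
    Matrix (Fin N → Fin 2) (Fin N → Fin 2) ℂ :=
  Matrix.of fun x y => ∑ a : Fin 2, ∑ b : Fin 2,
    L (Matrix.single a b 1) (x k) (y k) *
      M (Function.update x k a) (Function.update y k b)

/-- The EPR state `|Φ⟩⟨Φ|` with `|Φ⟩ = (|00⟩+|11⟩)/√2`, as a bipartite 4×4 density matrix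
(first tensor factor is Alice's qubit, the second is Bob's). -/
def EPR : Matrix (Fin 2 × Fin 2) (Fin 2 × Fin 2) ℂ :=
  Matrix.of fun p q => if p.1 = p.2 ∧ q.1 = q.2 then (1 / 2 : ℂ) else 0

/-- `Φ^{⊗n}`: n EPR pairs as a bipartite state, with the first factor holding Alice's
n qubits and the second factor holding Bob's n qubits. -/
def eprPow (n : ℕ) :
    Matrix ((Fin n → Fin 2) × (Fin n → Fin 2)) ((Fin n → Fin 2) × (Fin n → Fin 2)) ℂ :=
  Matrix.of fun p q => ∏ i : Fin n, EPR (p.1 i, p.2 i) (q.1 i, q.2 i)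

/-- The ρ-isotropic state `Φ_ρ = (Δ_ρ ⊗ id)(Φ)`. -/
def iso (ρ : ℝ) : Matrix (Fin 2 × Fin 2) (Fin 2 × Fin 2) ℂ :=
  lmTensor (delta ρ) id EPR

/-- `Φ_ρ^{⊗n}`: n isotropic states as a bipartite state, with the first factor holding
Alice's n qubits and the second factor holding Bob's n qubits. -/
def isoPow (ρ : ℝ) (n : ℕ) :
    Matrix ((Fin n → Fin 2) × (Fin n → Fin 2)) ((Fin n → Fin 2) × (Fin n → Fin 2)) ℂ :=
  Matrix.of fun p q => ∏ i : Fin n, iso ρ (p.1 i, p.2 i) (q.1 i, q.2 i)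

/-- `|A| = √(Aᴴ A)`. -/
def matAbs {I : Type*} [Fintype I] [DecidableEq I] (A : Matrix I I ℂ) : Matrix I I ℂ :=
  ((Matrix.posSemidef_conjTranspose_mul_self A).isHermitian.eigenvectorUnitary : Matrix I I ℂ) *
    Matrix.diagonal ((↑) ∘ (Real.sqrt ·) ∘
      (Matrix.posSemidef_conjTranspose_mul_self A).isHermitian.eigenvalues) *
    (star (Matrix.posSemidef_conjTranspose_mul_self A).isHermitian.eigenvectorUnitary :
      Matrix I I ℂ)

/-- Real power `A^r` of a Hermitian matrix, via the functional calculus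
(junk value `0` on non-Hermitian matrices). -/
def mpow {I : Type*} [Fintype I] [DecidableEq I] (A : Matrix I I ℂ) (r : ℝ) :
    Matrix I I ℂ :=
  if hA : A.IsHermitian then
    (Matrix.IsHermitian.eigenvectorUnitary hA : Matrix I I ℂ) *
      Matrix.diagonal (fun i => ((hA.eigenvalues i ^ r : ℝ) : ℂ)) *
      (Matrix.IsHermitian.eigenvectorUnitary hA : Matrix I I ℂ)ᴴ
  else 0

/-- The Schatten `p`-norm `‖A‖_p = (Tr[|A|^p])^{1/p}`. -/
def schatten {I : Type*} [Fintype I] [DecidableEq I] (p : ℝ) (A : Matrix I I ℂ) : ℝ :=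
  ((mpow (matAbs A) p).trace).re ^ (1 / p)

/-- The spectral norm of a matrix: the largest singular value. -/
def specNorm {I : Type*} [Fintype I] [DecidableEq I] (A : Matrix I I ℂ) : ℝ :=
  ⨆ i, Real.sqrt ((Matrix.posSemidef_conjTranspose_mul_self A).isHermitian.eigenvalues i)

/-- Partial trace over the second tensor factor. -/
def ptraceB {I J : Type*} [Fintype J] (M : Matrix (I × J) (I × J) ℂ) : Matrix I I ℂ :=
  Matrix.of fun i j => ∑ b : J, M (i, b) (j, b)

/-- A linear map between matrix algebras is completely positive if all its ampliations
`id_m ⊗ L` preserve positive semidefiniteness. -/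
def IsCompletelyPositive {I J : Type*} [Fintype I] [DecidableEq I] [Fintype J]
    (L : Matrix I I ℂ →ₗ[ℂ] Matrix J J ℂ) : Prop :=
  ∀ (m : ℕ) (M : Matrix (Fin m × I) (Fin m × I) ℂ), M.PosSemidef →
    (lmTensor (id : Matrix (Fin m) (Fin m) ℂ → Matrix (Fin m) (Fin m) ℂ) (⇑L) M).PosSemidef


section Aux
variable {ι : Type*} [Fintype ι] [DecidableEq ι]

lemma psd_diag_re_nonneg {Z : Matrix ι ι ℂ} (hZ : Z.PosSemidef) (i : ι) :
    0 ≤ (Z i i).re := by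
  have h := hZ.diag_nonneg (i := i)
  exact (Complex.le_def.mp h).1

lemma row_sq_le_one {W : Matrix ι ι ℂ} (h : (1 - W * Wᴴ).PosSemidef) (i : ι) :
    ∑ j, ‖W i j‖ ^ 2 ≤ 1 := by
  have h0 := psd_diag_re_nonneg h i
  have h1 : ((W * Wᴴ) i i).re = ∑ j, ‖W i j‖ ^ 2 := by
    rw [Matrix.mul_apply, Complex.re_sum]
    refine Finset.sum_congr rfl fun j _ => ?_
    rw [Matrix.conjTranspose_apply, RCLike.star_def, Complex.mul_conj, Complex.ofReal_re,
      Complex.normSq_eq_norm_sq]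
  have h2 : ((1 - W * Wᴴ) i i).re = 1 - ((W * Wᴴ) i i).re := by
    simp [Matrix.sub_apply, Matrix.one_apply_eq]
  rw [h2, h1] at h0
  linarith

lemma col_sq_le_one {W : Matrix ι ι ℂ} (h : (1 - Wᴴ * W).PosSemidef) (j : ι) :
    ∑ i, ‖W i j‖ ^ 2 ≤ 1 := by
  have := row_sq_le_one (W := Wᴴ) (by simpa using h) j
  simpa using this

lemma contraction_mul {W X : Matrix ι ι ℂ} (hW : (1 - Wᴴ * W).PosSemidef)
    (hX : (1 - Xᴴ * X).PosSemidef) : (1 - (W * X)ᴴ * (W * X)).PosSemidef := by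
  have key : 1 - (W * X)ᴴ * (W * X) = (1 - Xᴴ * X) + Xᴴ * (1 - Wᴴ * W) * X := by
    rw [Matrix.conjTranspose_mul]
    noncomm_ring
  rw [key]
  exact hX.add (hW.conjTranspose_mul_mul_same X)

lemma cs_le_one {x y : ι → ℝ} (hx : ∀ i, 0 ≤ x i) (hy : ∀ i, 0 ≤ y i)
    (hx2 : ∑ i, x i ^ 2 ≤ 1) (hy2 : ∑ i, y i ^ 2 ≤ 1) : ∑ i, x i * y i ≤ 1 := by
  have h := Finset.sum_mul_sq_le_sq_mul_sq Finset.univ x y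
  have h0 : 0 ≤ ∑ i, x i * y i :=
    Finset.sum_nonneg fun i _ => mul_nonneg (hx i) (hy i)
  have hX : 0 ≤ ∑ i, x i ^ 2 := Finset.sum_nonneg fun i _ => sq_nonneg _
  have hY : 0 ≤ ∑ i, y i ^ 2 := Finset.sum_nonneg fun i _ => sq_nonneg _
  nlinarith

lemma trace_bound (A B U₁ V₁ U₂ V₂ : Matrix ι ι ℂ) (a b : ι → ℝ)
    (ha : ∀ i, 0 ≤ a i) (hb : ∀ i, 0 ≤ b i)
    (hA : A = U₁ * Matrix.diagonal (fun i => (a i : ℂ)) * V₁ᴴ)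
    (hB : B = U₂ * Matrix.diagonal (fun i => (b i : ℂ)) * V₂ᴴ) :
    ‖(A * B).trace‖ ≤
      ∑ i, ∑ j, a i * b j * (‖(V₁ᴴ * U₂) i j‖ * ‖(V₂ᴴ * U₁) j i‖) := by
  have htr : (A * B).trace
      = ∑ j, ∑ i, (a i : ℂ) * (b j : ℂ) * ((V₁ᴴ * U₂) i j * (V₂ᴴ * U₁) j i) := by
    rw [hA, hB]
    set Da := Matrix.diagonal (fun i => (a i : ℂ))
    set Db := Matrix.diagonal (fun i => (b i : ℂ))
    calc ((U₁ * Da * V₁ᴴ) * (U₂ * Db * V₂ᴴ)).trace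
        = ((U₁ * (Da * (V₁ᴴ * U₂) * Db)) * V₂ᴴ).trace := by
          rw [show (U₁ * Da * V₁ᴴ) * (U₂ * Db * V₂ᴴ)
              = (U₁ * (Da * (V₁ᴴ * U₂) * Db)) * V₂ᴴ from by
            simp only [Matrix.mul_assoc]]
      _ = (V₂ᴴ * (U₁ * (Da * (V₁ᴴ * U₂) * Db))).trace := Matrix.trace_mul_comm _ _
      _ = ((V₂ᴴ * U₁ * (Da * (V₁ᴴ * U₂))) * Db).trace := by
          rw [show V₂ᴴ * (U₁ * (Da * (V₁ᴴ * U₂) * Db))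
              = (V₂ᴴ * U₁ * (Da * (V₁ᴴ * U₂))) * Db from by
            simp only [Matrix.mul_assoc]]
      _ = ∑ j, (V₂ᴴ * U₁ * (Da * (V₁ᴴ * U₂))) j j * (b j : ℂ) := by
          simp [Matrix.trace, Matrix.mul_diagonal, Matrix.diag, Db]
      _ = ∑ j, ∑ i, (a i : ℂ) * (b j : ℂ) * ((V₁ᴴ * U₂) i j * (V₂ᴴ * U₁) j i) := by
          refine Finset.sum_congr rfl fun j _ => ?_
          rw [Matrix.mul_apply, Finset.sum_mul]
          refine Finset.sum_congr rfl fun i _ => ?_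
          rw [Matrix.diagonal_mul]
          ring
  rw [htr]
  refine le_trans (norm_sum_le _ _) ?_
  rw [Finset.sum_comm]
  refine Finset.sum_le_sum fun i _ => ?_
  refine le_trans (norm_sum_le _ _) ?_
  refine Finset.sum_le_sum fun j _ => ?_
  rw [norm_mul, norm_mul, norm_mul, Complex.norm_real, Complex.norm_real,
    Real.norm_eq_abs, Real.norm_eq_abs, abs_of_nonneg (ha _), abs_of_nonneg (hb _)]

lemma w_bounds (U₁ V₁ U₂ V₂ : Matrix ι ι ℂ)
    (hU₁ : (1 - U₁ᴴ * U₁).PosSemidef) (hU₁' : (1 - U₁ * U₁ᴴ).PosSemidef)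
    (hV₁ : (1 - V₁ᴴ * V₁).PosSemidef) (hV₁' : (1 - V₁ * V₁ᴴ).PosSemidef)
    (hU₂ : (1 - U₂ᴴ * U₂).PosSemidef) (hU₂' : (1 - U₂ * U₂ᴴ).PosSemidef)
    (hV₂ : (1 - V₂ᴴ * V₂).PosSemidef) (hV₂' : (1 - V₂ * V₂ᴴ).PosSemidef) :
    (∀ i, ∑ j, ‖(V₁ᴴ * U₂) i j‖ * ‖(V₂ᴴ * U₁) j i‖ ≤ 1) ∧
    (∀ j, ∑ i, ‖(V₁ᴴ * U₂) i j‖ * ‖(V₂ᴴ * U₁) j i‖ ≤ 1) := by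
  have hP : (1 - (V₁ᴴ * U₂)ᴴ * (V₁ᴴ * U₂)).PosSemidef :=
    contraction_mul (by simpa using hV₁') hU₂
  have hP' : (1 - (V₁ᴴ * U₂) * (V₁ᴴ * U₂)ᴴ).PosSemidef := by
    have := contraction_mul (W := U₂ᴴ) (X := V₁) (by simpa using hU₂') hV₁
    have e : (U₂ᴴ * V₁)ᴴ * (U₂ᴴ * V₁) = (V₁ᴴ * U₂) * (V₁ᴴ * U₂)ᴴ := by
      simp [Matrix.conjTranspose_mul, Matrix.mul_assoc]
    rwa [e] at this
  have hQ : (1 - (V₂ᴴ * U₁)ᴴ * (V₂ᴴ * U₁)).PosSemidef :=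
    contraction_mul (by simpa using hV₂') hU₁
  have hQ' : (1 - (V₂ᴴ * U₁) * (V₂ᴴ * U₁)ᴴ).PosSemidef := by
    have := contraction_mul (W := U₁ᴴ) (X := V₂) (by simpa using hU₁') hV₂
    have e : (U₁ᴴ * V₂)ᴴ * (U₁ᴴ * V₂) = (V₂ᴴ * U₁) * (V₂ᴴ * U₁)ᴴ := by
      simp [Matrix.conjTranspose_mul, Matrix.mul_assoc]
    rwa [e] at this
  constructor
  · intro i
    exact cs_le_one (fun j => norm_nonneg _) (fun j => norm_nonneg _)
      (row_sq_le_one hP' i) (col_sq_le_one hQ i)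
  · intro j
    exact cs_le_one (fun i => norm_nonneg _) (fun i => norm_nonneg _)
      (col_sq_le_one hP j) (row_sq_le_one hQ' j)

lemma master_sup (A B U₁ V₁ U₂ V₂ : Matrix ι ι ℂ) (a b : ι → ℝ)
    (ha : ∀ i, 0 ≤ a i) (hb : ∀ i, 0 ≤ b i) (ha1 : ∀ i, a i ≤ 1)
    (hA : A = U₁ * Matrix.diagonal (fun i => (a i : ℂ)) * V₁ᴴ)
    (hB : B = U₂ * Matrix.diagonal (fun i => (b i : ℂ)) * V₂ᴴ)
    (hU₁ : (1 - U₁ᴴ * U₁).PosSemidef) (hU₁' : (1 - U₁ * U₁ᴴ).PosSemidef)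
    (hV₁ : (1 - V₁ᴴ * V₁).PosSemidef) (hV₁' : (1 - V₁ * V₁ᴴ).PosSemidef)
    (hU₂ : (1 - U₂ᴴ * U₂).PosSemidef) (hU₂' : (1 - U₂ * U₂ᴴ).PosSemidef)
    (hV₂ : (1 - V₂ᴴ * V₂).PosSemidef) (hV₂' : (1 - V₂ * V₂ᴴ).PosSemidef) :
    ‖(A * B).trace‖ ≤ ∑ j, b j := by
  obtain ⟨hrow, hcol⟩ := w_bounds U₁ V₁ U₂ V₂ hU₁ hU₁' hV₁ hV₁' hU₂ hU₂' hV₂ hV₂'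
  refine le_trans (trace_bound A B U₁ V₁ U₂ V₂ a b ha hb hA hB) ?_
  rw [Finset.sum_comm]
  refine Finset.sum_le_sum fun j _ => ?_
  calc ∑ i, a i * b j * (‖(V₁ᴴ * U₂) i j‖ * ‖(V₂ᴴ * U₁) j i‖)
      ≤ ∑ i, b j * (‖(V₁ᴴ * U₂) i j‖ * ‖(V₂ᴴ * U₁) j i‖) := by
        refine Finset.sum_le_sum fun i _ => ?_
        have hw : 0 ≤ ‖(V₁ᴴ * U₂) i j‖ * ‖(V₂ᴴ * U₁) j i‖ :=
          mul_nonneg (norm_nonneg _) (norm_nonneg _)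
        rw [mul_assoc]
        exact mul_le_of_le_one_left (mul_nonneg (hb j) hw) (ha1 i)
    _ = b j * ∑ i, ‖(V₁ᴴ * U₂) i j‖ * ‖(V₂ᴴ * U₁) j i‖ := by rw [Finset.mul_sum]
    _ ≤ b j * 1 := by
        exact mul_le_mul_of_nonneg_left (hcol j) (hb j)
    _ = b j := mul_one _

lemma master_holder (A B U₁ V₁ U₂ V₂ : Matrix ι ι ℂ) (a b : ι → ℝ) {pp qq : ℝ}
    (hqp : Real.HolderConjugate qq pp)
    (ha : ∀ i, 0 ≤ a i) (hb : ∀ i, 0 ≤ b i)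
    (hA : A = U₁ * Matrix.diagonal (fun i => (a i : ℂ)) * V₁ᴴ)
    (hB : B = U₂ * Matrix.diagonal (fun i => (b i : ℂ)) * V₂ᴴ)
    (hU₁ : (1 - U₁ᴴ * U₁).PosSemidef) (hU₁' : (1 - U₁ * U₁ᴴ).PosSemidef)
    (hV₁ : (1 - V₁ᴴ * V₁).PosSemidef) (hV₁' : (1 - V₁ * V₁ᴴ).PosSemidef)
    (hU₂ : (1 - U₂ᴴ * U₂).PosSemidef) (hU₂' : (1 - U₂ * U₂ᴴ).PosSemidef)
    (hV₂ : (1 - V₂ᴴ * V₂).PosSemidef) (hV₂' : (1 - V₂ * V₂ᴴ).PosSemidef) :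
    ‖(A * B).trace‖ ≤ (∑ i, a i ^ qq) ^ (1 / qq) * (∑ i, b i ^ pp) ^ (1 / pp) := by
  obtain ⟨hrow, hcol⟩ := w_bounds U₁ V₁ U₂ V₂ hU₁ hU₁' hV₁ hV₁' hU₂ hU₂' hV₂ hV₂'
  set w : ι → ι → ℝ := fun i j => ‖(V₁ᴴ * U₂) i j‖ * ‖(V₂ᴴ * U₁) j i‖ with hw_def
  have hw : ∀ i j, 0 ≤ w i j := fun i j => mul_nonneg (norm_nonneg _) (norm_nonneg _)
  have hq0 : qq ≠ 0 := hqp.ne_zero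
  have hp0 : pp ≠ 0 := hqp.symm.ne_zero
  refine le_trans (trace_bound A B U₁ V₁ U₂ V₂ a b ha hb hA hB) ?_
  have hsum : ∑ i, ∑ j, a i * b j * w i j
      = ∑ ij : ι × ι, (a ij.1 ^ qq * w ij.1 ij.2) ^ (1 / qq)
          * (b ij.2 ^ pp * w ij.1 ij.2) ^ (1 / pp) := by
    rw [Fintype.sum_prod_type]
    refine Finset.sum_congr rfl fun i _ => Finset.sum_congr rfl fun j _ => ?_
    rcases eq_or_lt_of_le (hw i j) with h0 | h0
    · rw [← h0, mul_zero, mul_zero, mul_zero,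
        Real.zero_rpow (by simpa using hq0), zero_mul]
    · rw [one_div, one_div,
        Real.mul_rpow (Real.rpow_nonneg (ha i) _) (hw i j),
        Real.mul_rpow (Real.rpow_nonneg (hb j) _) (hw i j),
        Real.rpow_rpow_inv (ha i) hq0, Real.rpow_rpow_inv (hb j) hp0]
      show a i * b j * w i j = a i * w i j ^ qq⁻¹ * (b j * w i j ^ pp⁻¹)
      have hww : w i j ^ qq⁻¹ * w i j ^ pp⁻¹ = w i j := by
        rw [← Real.rpow_add h0, hqp.inv_add_inv_eq_one, Real.rpow_one]
      linear_combination (-(a i * b j)) * hww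
  rw [hsum]
  refine le_trans (Real.inner_le_Lp_mul_Lq_of_nonneg Finset.univ hqp
    (fun ij _ => Real.rpow_nonneg (mul_nonneg (Real.rpow_nonneg (ha _) _) (hw _ _)) _)
    (fun ij _ => Real.rpow_nonneg (mul_nonneg (Real.rpow_nonneg (hb _) _) (hw _ _)) _)) ?_
  have hfq : ∑ ij : ι × ι, ((a ij.1 ^ qq * w ij.1 ij.2) ^ (1 / qq)) ^ qq
      ≤ ∑ i, a i ^ qq := by
    have e : ∀ ij : ι × ι, ((a ij.1 ^ qq * w ij.1 ij.2) ^ (1 / qq)) ^ qq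
        = a ij.1 ^ qq * w ij.1 ij.2 := fun ij => by
      rw [one_div, Real.rpow_inv_rpow (mul_nonneg (Real.rpow_nonneg (ha _) _) (hw _ _)) hq0]
    simp_rw [e]
    rw [Fintype.sum_prod_type]
    calc ∑ i, ∑ j, a i ^ qq * w i j = ∑ i, a i ^ qq * ∑ j, w i j := by
          simp_rw [Finset.mul_sum]
      _ ≤ ∑ i, a i ^ qq * 1 :=
          Finset.sum_le_sum fun i _ =>
            mul_le_mul_of_nonneg_left (hrow i) (Real.rpow_nonneg (ha i) _)
      _ = ∑ i, a i ^ qq := by simp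
  have hgp : ∑ ij : ι × ι, ((b ij.2 ^ pp * w ij.1 ij.2) ^ (1 / pp)) ^ pp
      ≤ ∑ j, b j ^ pp := by
    have e : ∀ ij : ι × ι, ((b ij.2 ^ pp * w ij.1 ij.2) ^ (1 / pp)) ^ pp
        = b ij.2 ^ pp * w ij.1 ij.2 := fun ij => by
      rw [one_div, Real.rpow_inv_rpow (mul_nonneg (Real.rpow_nonneg (hb _) _) (hw _ _)) hp0]
    simp_rw [e]
    rw [Fintype.sum_prod_type]
    rw [Finset.sum_comm]
    calc ∑ j, ∑ i, b j ^ pp * w i j = ∑ j, b j ^ pp * ∑ i, w i j := by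
          simp_rw [Finset.mul_sum]
      _ ≤ ∑ j, b j ^ pp * 1 :=
          Finset.sum_le_sum fun j _ =>
            mul_le_mul_of_nonneg_left (hcol j) (Real.rpow_nonneg (hb j) _)
      _ = ∑ j, b j ^ pp := by simp
  have h1 : (0:ℝ) ≤ ∑ ij : ι × ι, ((a ij.1 ^ qq * w ij.1 ij.2) ^ (1 / qq)) ^ qq :=
    Finset.sum_nonneg fun ij _ => Real.rpow_nonneg (Real.rpow_nonneg
      (mul_nonneg (Real.rpow_nonneg (ha _) _) (hw _ _)) _) _
  have h2 : (0:ℝ) ≤ ∑ ij : ι × ι, ((b ij.2 ^ pp * w ij.1 ij.2) ^ (1 / pp)) ^ pp :=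
    Finset.sum_nonneg fun ij _ => Real.rpow_nonneg (Real.rpow_nonneg
      (mul_nonneg (Real.rpow_nonneg (hb _) _) (hw _ _)) _) _
  exact mul_le_mul
    (Real.rpow_le_rpow h1 hfq hqp.one_div_nonneg)
    (Real.rpow_le_rpow h2 hgp hqp.symm.one_div_nonneg)
    (Real.rpow_nonneg h2 _) (Real.rpow_nonneg (Finset.sum_nonneg
      fun i _ => Real.rpow_nonneg (ha i) _) _)


lemma exists_svd (A : Matrix ι ι ℂ) :
    ∃ (U V : Matrix ι ι ℂ) (s : ι → ℝ),
      (∀ i, 0 ≤ s i) ∧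
      Vᴴ * V = 1 ∧ V * Vᴴ = 1 ∧
      (1 - Uᴴ * U).PosSemidef ∧ (1 - U * Uᴴ).PosSemidef ∧
      Uᴴ * U = Matrix.diagonal (fun i => if s i = 0 then (0:ℂ) else 1) ∧
      A = U * Matrix.diagonal (fun i => (s i : ℂ)) * Vᴴ ∧
      (∀ r : ℝ, (mpow (matAbs A) r).trace = ∑ i, ((s i ^ r : ℝ) : ℂ)) := by
  have hAA := Matrix.posSemidef_conjTranspose_mul_self A
  have habs : (matAbs A).PosSemidef := by
    unfold matAbs
    rw [Matrix.star_eq_conjTranspose]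
    exact (Matrix.posSemidef_diagonal_iff.mpr fun i => by
      simp [Real.sqrt_nonneg]).mul_mul_conjTranspose_same _
  have hH : (matAbs A).IsHermitian := habs.isHermitian
  set V : Matrix ι ι ℂ := (Matrix.IsHermitian.eigenvectorUnitary hH : Matrix ι ι ℂ) with hVdef
  set s : ι → ℝ := hH.eigenvalues with hsdef
  have hs0 : ∀ i, 0 ≤ s i := fun i => habs.eigenvalues_nonneg i
  have hV1 : Vᴴ * V = 1 := by
    rw [← Matrix.star_eq_conjTranspose]
    exact Matrix.mem_unitaryGroup_iff'.mp (Matrix.IsHermitian.eigenvectorUnitary hH).2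
  have hV2 : V * Vᴴ = 1 := by
    rw [← Matrix.star_eq_conjTranspose]
    exact Matrix.mem_unitaryGroup_iff.mp (Matrix.IsHermitian.eigenvectorUnitary hH).2
  set D : Matrix ι ι ℂ := Matrix.diagonal (fun i => (s i : ℂ)) with hDdef
  have hspec : matAbs A = V * D * Vᴴ := by
    have h := hH.spectral_theorem
    rw [Unitary.conjStarAlgAut_apply, Matrix.star_eq_conjTranspose] at h
    exact h
  have hA2 : Aᴴ * A = matAbs A * matAbs A := by
    have hP := Matrix.posSemidef_conjTranspose_mul_self A
    have h := (Matrix.posSemidef_conjTranspose_mul_self A).isHermitian.spectral_theorem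
    rw [Unitary.conjStarAlgAut_apply] at h
    unfold matAbs
    set W := (Matrix.posSemidef_conjTranspose_mul_self A).isHermitian.eigenvectorUnitary with hW
    have hu : star (W : Matrix ι ι ℂ) * (W : Matrix ι ι ℂ) = 1 := by
      rw [← Unitary.coe_star]; exact Unitary.coe_star_mul_self W
    conv_lhs => rw [h]
    simp only [Matrix.mul_assoc]
    rw [← Matrix.mul_assoc (star (↑W : Matrix ι ι ℂ)) (↑W : Matrix ι ι ℂ), hu, Matrix.one_mul,
      ← Matrix.mul_assoc (Matrix.diagonal _) (Matrix.diagonal _), Matrix.diagonal_mul_diagonal]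
    congr 3
    funext i
    simp only [Function.comp_apply]
    rw [← Complex.ofReal_mul, Real.mul_self_sqrt (hP.eigenvalues_nonneg i)]
    rfl
  have h1 : Vᴴ * matAbs A = D * Vᴴ := by
    rw [hspec, ← Matrix.mul_assoc, ← Matrix.mul_assoc, hV1, Matrix.one_mul]
  have h2 : matAbs A * V = V * D := by
    rw [hspec, Matrix.mul_assoc, hV1, Matrix.mul_one]
  have hsq : Vᴴ * (Aᴴ * A) * V = Matrix.diagonal (fun i => ((s i ^ 2 : ℝ) : ℂ)) := by
    calc Vᴴ * (Aᴴ * A) * V = (Vᴴ * matAbs A) * (matAbs A * V) := by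
          rw [hA2]; simp only [Matrix.mul_assoc]
      _ = D * Vᴴ * (V * D) := by rw [h1, h2]
      _ = D * (Vᴴ * V) * D := by simp only [Matrix.mul_assoc]
      _ = D * D := by rw [hV1, Matrix.mul_one]
      _ = Matrix.diagonal (fun i => ((s i ^ 2 : ℝ) : ℂ)) := by
          rw [hDdef, Matrix.diagonal_mul_diagonal]
          congr 1; funext i; push_cast; ring
  set Dinv : Matrix ι ι ℂ :=
    Matrix.diagonal (fun i => ((if s i = 0 then (0:ℝ) else (s i)⁻¹ : ℝ) : ℂ)) with hDinvdef
  set U : Matrix ι ι ℂ := A * V * Dinv with hUdef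
  have hDinvH : Dinvᴴ = Dinv := by
    rw [hDinvdef, Matrix.diagonal_conjTranspose]
    refine congrArg _ (funext fun i => ?_)
    simp [Complex.star_def, Complex.conj_ofReal]
  have hUH : Uᴴ = Dinv * (Vᴴ * Aᴴ) := by
    rw [hUdef, Matrix.conjTranspose_mul, Matrix.conjTranspose_mul, hDinvH]
  have hUdU : Uᴴ * U = Matrix.diagonal (fun i => if s i = 0 then (0:ℂ) else 1) := by
    have e : Uᴴ * U = Dinv * (Vᴴ * (Aᴴ * A) * V) * Dinv := by
      rw [hUH, hUdef]; simp only [Matrix.mul_assoc]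
    rw [e, hsq, hDinvdef, Matrix.diagonal_mul_diagonal, Matrix.diagonal_mul_diagonal]
    refine congrArg _ (funext fun i => ?_)
    by_cases h : s i = 0
    · simp [h]
    · have hne : (s i : ℂ) ≠ 0 := by exact_mod_cast h
      simp only [if_neg h]
      push_cast
      field_simp
  set Dz : Matrix ι ι ℂ := Matrix.diagonal (fun i => if s i = 0 then (1:ℂ) else 0) with hDzdef
  have hz : A * V * Dz = 0 := by
    rw [← Matrix.conjTranspose_mul_self_eq_zero]
    have hDzH : Dzᴴ = Dz := by
      rw [hDzdef, Matrix.diagonal_conjTranspose]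
      refine congrArg _ (funext fun i => ?_)
      by_cases h : s i = 0 <;> simp [h]
    have e : (A * V * Dz)ᴴ * (A * V * Dz) = Dz * (Vᴴ * (Aᴴ * A) * V) * Dz := by
      rw [Matrix.conjTranspose_mul, Matrix.conjTranspose_mul, hDzH]
      simp only [Matrix.mul_assoc]
    rw [e, hsq, hDzdef, Matrix.diagonal_mul_diagonal, Matrix.diagonal_mul_diagonal]
    ext i j
    by_cases h : s i = 0 <;> simp [Matrix.diagonal_apply, h]
  have hdiagχ : Matrix.diagonal (fun i => if s i = 0 then (0:ℂ) else 1) = 1 - Dz := by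
    rw [hDzdef, ← Matrix.diagonal_one, Matrix.diagonal_sub]
    refine congrArg _ (funext fun i => ?_)
    by_cases h : s i = 0 <;> simp [h]
  have hdec : A = U * D * Vᴴ := by
    have e1 : Dinv * D = Matrix.diagonal (fun i => if s i = 0 then (0:ℂ) else 1) := by
      rw [hDinvdef, hDdef, Matrix.diagonal_mul_diagonal]
      refine congrArg _ (funext fun i => ?_)
      by_cases h : s i = 0
      · simp [h]
      · have hne : (s i : ℂ) ≠ 0 := by exact_mod_cast h
        simp only [if_neg h]
        push_cast
        field_simp
    have e2 : U * D = A * V * (1 - Dz) := by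
      rw [hUdef, Matrix.mul_assoc, e1, hdiagχ]
    rw [e2, Matrix.mul_sub, Matrix.mul_one, Matrix.sub_mul, hz, Matrix.zero_mul,
      sub_zero, Matrix.mul_assoc, hV2, Matrix.mul_one]
  have hUz : U * Dz = 0 := by
    rw [← Matrix.conjTranspose_mul_self_eq_zero]
    have hDzH : Dzᴴ = Dz := by
      rw [hDzdef, Matrix.diagonal_conjTranspose]
      refine congrArg _ (funext fun i => ?_)
      by_cases h : s i = 0 <;> simp [h]
    have e : (U * Dz)ᴴ * (U * Dz) = Dz * (Uᴴ * U) * Dz := by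
      rw [Matrix.conjTranspose_mul, hDzH]; simp only [Matrix.mul_assoc]
    rw [e, hUdU, hDzdef, Matrix.diagonal_mul_diagonal, Matrix.diagonal_mul_diagonal]
    ext i j
    by_cases h : s i = 0 <;> simp [Matrix.diagonal_apply, h]
  have hUχ : U * Matrix.diagonal (fun i => if s i = 0 then (0:ℂ) else 1) = U := by
    rw [hdiagχ, Matrix.mul_sub, Matrix.mul_one, hUz, sub_zero]
  have hproj : (U * Uᴴ) * (U * Uᴴ) = U * Uᴴ := by
    calc (U * Uᴴ) * (U * Uᴴ) = U * (Uᴴ * U) * Uᴴ := by simp only [Matrix.mul_assoc]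
      _ = U * Uᴴ := by rw [hUdU, hUχ]
  have hUUc' : (1 - U * Uᴴ).PosSemidef := by
    have hherm : (1 - U * Uᴴ)ᴴ = 1 - U * Uᴴ := by
      simp [Matrix.conjTranspose_sub, Matrix.conjTranspose_one, Matrix.conjTranspose_mul]
    have hidem : (1 - U * Uᴴ) * (1 - U * Uᴴ) = 1 - U * Uᴴ := by
      simp only [Matrix.sub_mul, Matrix.mul_sub, Matrix.mul_one, Matrix.one_mul, hproj]
      abel
    have e : (1 - U * Uᴴ) = (1 - U * Uᴴ)ᴴ * (1 - U * Uᴴ) := by rw [hherm, hidem]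
    rw [e]
    exact Matrix.posSemidef_conjTranspose_mul_self _
  have hUUc : (1 - Uᴴ * U).PosSemidef := by
    rw [hUdU, hdiagχ, sub_sub_cancel, hDzdef]
    refine Matrix.posSemidef_diagonal_iff.mpr fun i => ?_
    split_ifs
    · exact zero_le_one
    · exact le_refl 0
  have htr : ∀ r : ℝ, (mpow (matAbs A) r).trace = ∑ i, ((s i ^ r : ℝ) : ℂ) := by
    intro r
    have e : mpow (matAbs A) r
        = V * Matrix.diagonal (fun i => ((s i ^ r : ℝ) : ℂ)) * Vᴴ := by
      unfold mpow
      rw [dif_pos hH]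
    rw [e, Matrix.trace_mul_cycle, hV1, Matrix.one_mul, Matrix.trace_diagonal]
  exact ⟨U, V, s, hs0, hV1, hV2, hUUc, hUUc', hUdU, hdec, htr⟩

end Aux

section Kron
variable {ι J : Type*} [Fintype ι] [DecidableEq ι] [Fintype J] [DecidableEq J]

lemma kron_one_conjTranspose (W : Matrix ι ι ℂ) :
    (W ⊗ₖ (1 : Matrix J J ℂ))ᴴ = Wᴴ ⊗ₖ (1 : Matrix J J ℂ) := by
  ext p q
  simp only [Matrix.conjTranspose_apply, Matrix.kroneckerMap_apply, Matrix.one_apply,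
    mul_ite, mul_one, mul_zero, apply_ite (star : ℂ → ℂ), star_zero]
  by_cases h : q.2 = p.2
  · rw [if_pos h, if_pos h.symm]
  · rw [if_neg h, if_neg (fun hh : p.2 = q.2 => h hh.symm)]

lemma sub_kron_one (A B : Matrix ι ι ℂ) :
    (A - B) ⊗ₖ (1 : Matrix J J ℂ) = A ⊗ₖ (1 : Matrix J J ℂ) - B ⊗ₖ (1 : Matrix J J ℂ) := by
  ext p q
  simp [Matrix.kroneckerMap_apply, Matrix.sub_apply, sub_mul]

lemma psd_kron_one {Z : Matrix ι ι ℂ} (hZ : Z.PosSemidef) :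
    (Z ⊗ₖ (1 : Matrix J J ℂ)).PosSemidef := by
  exact hZ.kronecker Matrix.PosSemidef.one

lemma diag_kron_one (c : ι → ℂ) :
    (Matrix.diagonal c) ⊗ₖ (1 : Matrix J J ℂ)
      = Matrix.diagonal (fun ij : ι × J => c ij.1) := by
  rw [← Matrix.diagonal_one, Matrix.diagonal_kronecker_diagonal]
  simp

lemma trace_kron_mul (X : Matrix ι ι ℂ) (M : Matrix (ι × J) (ι × J) ℂ) :
    ((X ⊗ₖ (1 : Matrix J J ℂ)) * M).trace = (X * ptraceB M).trace := by
  simp only [Matrix.trace, Matrix.diag_apply, Matrix.mul_apply, Fintype.sum_prod_type,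
    Matrix.kroneckerMap_apply, Matrix.one_apply, ptraceB, Matrix.of_apply,
    mul_ite, mul_one, mul_zero, ite_mul, zero_mul, Finset.mul_sum]
  refine Finset.sum_congr rfl fun i _ => ?_
  rw [Finset.sum_comm]
  refine Finset.sum_congr rfl fun b _ => ?_
  refine Finset.sum_congr rfl fun j _ => ?_
  rw [Finset.sum_ite_eq]
  simp

end Kron


/-- The Schatten `p`-norm under partial trace: `‖Tr_B(M)‖_p ≤ d_B^{(p-1)/p}·‖M‖_p`. -/
theorem stmt13 (dA dB : ℕ)
    (M : Matrix (Fin dA × Fin dB) (Fin dA × Fin dB) ℂ) (p : ℝ) (hp : 1 ≤ p) :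
    schatten p (ptraceB M) ≤ (dB : ℝ) ^ ((p - 1) / p) * schatten p M := by
  obtain ⟨UM, VM, t, ht0, hVM1, hVM2, hUMc, hUMc', hUMd, hMdec, hMtr⟩ := exists_svd M
  obtain ⟨UN, VN, s, hs0, hVN1, hVN2, hUNc, hUNc', hUNd, hNdec, hNtr⟩ :=
    exists_svd (ptraceB M)
  have hp0 : p ≠ 0 := by linarith
  set Sp : ℝ := ∑ i, s i ^ p with hSpdef
  set Tp : ℝ := ∑ k, t k ^ p with hTpdef
  have hSp0 : 0 ≤ Sp := Finset.sum_nonneg fun i _ => Real.rpow_nonneg (hs0 i) _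
  have hTp0 : 0 ≤ Tp := Finset.sum_nonneg fun k _ => Real.rpow_nonneg (ht0 k) _
  have hSN : schatten p (ptraceB M) = Sp ^ (1/p) := by
    unfold schatten
    rw [hNtr p, ← Complex.ofReal_sum, Complex.ofReal_re]
  have hSM : schatten p M = Tp ^ (1/p) := by
    unfold schatten
    rw [hMtr p, ← Complex.ofReal_sum, Complex.ofReal_re]
  set c : Fin dA → ℝ := fun i => s i ^ (p - 1) with hcdef
  have hc0 : ∀ i, 0 ≤ c i := fun i => Real.rpow_nonneg (hs0 i) _
  set Dc : Matrix (Fin dA) (Fin dA) ℂ := Matrix.diagonal (fun i => (c i : ℂ)) with hDcdef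
  set X : Matrix (Fin dA) (Fin dA) ℂ := VN * Dc * UNᴴ with hXdef
  have hdiag3 : Dc * (UNᴴ * UN) * Matrix.diagonal (fun i => (s i : ℂ))
      = Matrix.diagonal (fun i => ((s i ^ p : ℝ) : ℂ)) := by
    rw [hUNd, hDcdef, Matrix.diagonal_mul_diagonal, Matrix.diagonal_mul_diagonal]
    refine congrArg _ (funext fun i => ?_)
    by_cases h : s i = 0
    · simp [h, Real.zero_rpow hp0]
    · have hps : s i ^ p = c i * s i := by
        have h2 := Real.rpow_add_one h (p - 1)
        rw [sub_add_cancel] at h2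
        rw [hcdef, h2]
      rw [if_neg h, hps]
      push_cast
      ring
  have h1 : (X * ptraceB M).trace = ((Sp : ℝ) : ℂ) := by
    rw [hXdef, hNdec]
    have e : VN * Dc * UNᴴ * (UN * Matrix.diagonal (fun i => (s i : ℂ)) * VNᴴ)
        = VN * (Dc * (UNᴴ * UN) * Matrix.diagonal (fun i => (s i : ℂ))) * VNᴴ := by
      simp only [Matrix.mul_assoc]
    rw [e, hdiag3, Matrix.trace_mul_cycle, hVN1, Matrix.one_mul, Matrix.trace_diagonal,
      ← Complex.ofReal_sum]
  set K : Matrix (Fin dA × Fin dB) (Fin dA × Fin dB) ℂ :=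
    X ⊗ₖ (1 : Matrix (Fin dB) (Fin dB) ℂ) with hKdef
  have hKdec : K = (VN ⊗ₖ (1 : Matrix (Fin dB) (Fin dB) ℂ))
      * Matrix.diagonal (fun ij : Fin dA × Fin dB => (c ij.1 : ℂ))
      * (UN ⊗ₖ (1 : Matrix (Fin dB) (Fin dB) ℂ))ᴴ := by
    rw [hKdef, hXdef]
    calc (VN * Dc * UNᴴ) ⊗ₖ (1 : Matrix (Fin dB) (Fin dB) ℂ)
        = ((VN * Dc) * UNᴴ) ⊗ₖ ((1 : Matrix (Fin dB) (Fin dB) ℂ) * 1) := by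
          rw [Matrix.one_mul]
      _ = ((VN * Dc) ⊗ₖ (1 : Matrix (Fin dB) (Fin dB) ℂ))
            * (UNᴴ ⊗ₖ (1 : Matrix (Fin dB) (Fin dB) ℂ)) := Matrix.mul_kronecker_mul _ _ _ _
      _ = ((VN ⊗ₖ (1 : Matrix (Fin dB) (Fin dB) ℂ))
            * (Dc ⊗ₖ (1 : Matrix (Fin dB) (Fin dB) ℂ)))
            * (UNᴴ ⊗ₖ (1 : Matrix (Fin dB) (Fin dB) ℂ)) := by
          rw [show (VN * Dc) ⊗ₖ (1 : Matrix (Fin dB) (Fin dB) ℂ)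
              = (VN ⊗ₖ (1 : Matrix (Fin dB) (Fin dB) ℂ))
                * (Dc ⊗ₖ (1 : Matrix (Fin dB) (Fin dB) ℂ)) from by
            rw [← Matrix.mul_kronecker_mul, Matrix.one_mul]]
      _ = (VN ⊗ₖ (1 : Matrix (Fin dB) (Fin dB) ℂ))
            * Matrix.diagonal (fun ij : Fin dA × Fin dB => (c ij.1 : ℂ))
            * (UN ⊗ₖ (1 : Matrix (Fin dB) (Fin dB) ℂ))ᴴ := by
          rw [hDcdef, diag_kron_one, kron_one_conjTranspose]
  have hone : ((1 : Matrix (Fin dA) (Fin dA) ℂ) ⊗ₖ (1 : Matrix (Fin dB) (Fin dB) ℂ))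
      = (1 : Matrix (Fin dA × Fin dB) (Fin dA × Fin dB) ℂ) := Matrix.one_kronecker_one
  have hsubk : ∀ Z : Matrix (Fin dA) (Fin dA) ℂ,
      (1 : Matrix (Fin dA × Fin dB) (Fin dA × Fin dB) ℂ)
        - Z ⊗ₖ (1 : Matrix (Fin dB) (Fin dB) ℂ)
      = ((1 : Matrix (Fin dA) (Fin dA) ℂ) - Z) ⊗ₖ (1 : Matrix (Fin dB) (Fin dB) ℂ) := by
    intro Z
    rw [sub_kron_one, hone]
  have cV1 : (1 - (VN ⊗ₖ (1 : Matrix (Fin dB) (Fin dB) ℂ))ᴴ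
      * (VN ⊗ₖ (1 : Matrix (Fin dB) (Fin dB) ℂ))).PosSemidef := by
    rw [kron_one_conjTranspose, ← Matrix.mul_kronecker_mul, hVN1, Matrix.one_mul, hone,
      sub_self]
    exact Matrix.PosSemidef.zero
  have cV2 : (1 - (VN ⊗ₖ (1 : Matrix (Fin dB) (Fin dB) ℂ))
      * (VN ⊗ₖ (1 : Matrix (Fin dB) (Fin dB) ℂ))ᴴ).PosSemidef := by
    rw [kron_one_conjTranspose, ← Matrix.mul_kronecker_mul, hVN2, Matrix.one_mul, hone,
      sub_self]
    exact Matrix.PosSemidef.zero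
  have cU1 : (1 - (UN ⊗ₖ (1 : Matrix (Fin dB) (Fin dB) ℂ))ᴴ
      * (UN ⊗ₖ (1 : Matrix (Fin dB) (Fin dB) ℂ))).PosSemidef := by
    rw [kron_one_conjTranspose, ← Matrix.mul_kronecker_mul, Matrix.one_mul, hsubk]
    exact psd_kron_one hUNc
  have cU2 : (1 - (UN ⊗ₖ (1 : Matrix (Fin dB) (Fin dB) ℂ))
      * (UN ⊗ₖ (1 : Matrix (Fin dB) (Fin dB) ℂ))ᴴ).PosSemidef := by
    rw [kron_one_conjTranspose, ← Matrix.mul_kronecker_mul, Matrix.one_mul, hsubk]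
    exact psd_kron_one hUNc'
  have cVM1 : (1 - VMᴴ * VM).PosSemidef := by
    rw [hVM1, sub_self]; exact Matrix.PosSemidef.zero
  have cVM2 : (1 - VM * VMᴴ).PosSemidef := by
    rw [hVM2, sub_self]; exact Matrix.PosSemidef.zero
  have hnorm : ‖(K * M).trace‖ = Sp := by
    rw [hKdef, trace_kron_mul, h1, Complex.norm_real, Real.norm_of_nonneg hSp0]
  rcases eq_or_lt_of_le hp with hp1 | hp1
  · -- p = 1
    subst hp1
    have ha1 : ∀ ij : Fin dA × Fin dB, (fun ij : Fin dA × Fin dB => c ij.1) ij ≤ 1 := by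
      intro ij
      simp only [hcdef, sub_self, Real.rpow_zero]
      exact le_refl 1
    have key := master_sup K M (VN ⊗ₖ (1 : Matrix (Fin dB) (Fin dB) ℂ))
      (UN ⊗ₖ (1 : Matrix (Fin dB) (Fin dB) ℂ)) UM VM
      (fun ij : Fin dA × Fin dB => c ij.1) t
      (fun ij => hc0 ij.1) ht0 ha1 hKdec hMdec cV1 cV2 cU1 cU2 hUMc hUMc' cVM1 cVM2
    rw [hnorm] at key
    rw [hSN, hSM]
    have e0 : (1 - 1) / (1:ℝ) = 0 := by norm_num
    rw [e0, Real.rpow_zero, one_mul, one_div_one, Real.rpow_one, Real.rpow_one]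
    refine le_trans key ?_
    rw [hTpdef]
    refine le_of_eq (Finset.sum_congr rfl fun k _ => ?_)
    rw [Real.rpow_one]
  · -- 1 < p
    have hpq : p.HolderConjugate (p / (p - 1)) := Real.HolderConjugate.conjExponent hp1
    set q : ℝ := p / (p - 1) with hqdef
    have hqp : q.HolderConjugate p := hpq.symm
    have key := master_holder K M (VN ⊗ₖ (1 : Matrix (Fin dB) (Fin dB) ℂ))
      (UN ⊗ₖ (1 : Matrix (Fin dB) (Fin dB) ℂ)) UM VM
      (fun ij : Fin dA × Fin dB => c ij.1) t hqp
      (fun ij => hc0 ij.1) ht0 hKdec hMdec cV1 cV2 cU1 cU2 hUMc hUMc' cVM1 cVM2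
    rw [hnorm] at key
    have haq : ∑ ij : Fin dA × Fin dB, c ij.1 ^ q = (dB : ℝ) * Sp := by
      have e : ∀ i, c i ^ q = s i ^ p := by
        intro i
        rw [hcdef]
        rw [← Real.rpow_mul (hs0 i), hpq.sub_one_mul_conj]
      rw [Fintype.sum_prod_type_right]
      simp only [e]
      rw [Finset.sum_const, Finset.card_univ, Fintype.card_fin, nsmul_eq_mul, hSpdef]
    rw [haq] at key
    by_cases hS : Sp = 0
    · rw [hSN, hSM, hS, Real.zero_rpow (one_div_ne_zero hp0)]
      exact mul_nonneg (Real.rpow_nonneg (Nat.cast_nonneg dB) _)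
        (Real.rpow_nonneg hTp0 _)
    · have hSpos : 0 < Sp := lt_of_le_of_ne hSp0 (Ne.symm hS)
      have e1 : ((dB : ℝ) * Sp) ^ (1/q) = (dB : ℝ) ^ (1/q) * Sp ^ (1/q) :=
        Real.mul_rpow (Nat.cast_nonneg _) hSp0
      have e2 : Sp = Sp ^ (1/q) * Sp ^ (1/p) := by
        rw [one_div, one_div, ← Real.rpow_add hSpos, hqp.inv_add_inv_eq_one, Real.rpow_one]
      have key2 : Sp ^ (1/q) * Sp ^ (1/p)
          ≤ Sp ^ (1/q) * ((dB : ℝ) ^ (1/q) * Tp ^ (1/p)) := by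
        rw [← e2]
        calc Sp ≤ ((dB : ℝ) * Sp) ^ (1/q) * Tp ^ (1/p) := key
          _ = Sp ^ (1/q) * ((dB : ℝ) ^ (1/q) * Tp ^ (1/p)) := by rw [e1]; ring
      have key3 : Sp ^ (1/p) ≤ (dB : ℝ) ^ (1/q) * Tp ^ (1/p) :=
        le_of_mul_le_mul_left key2 (Real.rpow_pos_of_pos hSpos _)
      have hq_eq : 1/q = (p - 1) / p := by
        rw [hqdef, one_div_div]
      rw [hSN, hSM, ← hq_eq]
      exact key3

end
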